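/- arXiv:math/0508553 — 5 statements merged into one kernel-verified Lean document; each statement's English description precedes it below -/
import Mathlib

section
/- Let ω_1, ..., ω_k be finitely many complex numbers, each of modulus 1, with k ≥ 1. Then the sequence N ↦ ω_1^N + ... + ω_k^N does not converge to 0 as N → ∞. -/
open Filter

/-- A nonempty finite sum of `N`-th powers of complex numbers of modulus `1`
does not converge to `0` as `N → ∞`. -/
theorem stmt_4 (k : ℕ) (hk : 1 ≤ k) (ω : Fin k → ℂ)
    (hω : ∀ j, ‖ω j‖ = 1) :
    ¬ Tendsto (fun N : ℕ => ∑ j, ω j ^ N) atTop (nhds 0) := by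
  intro h
  set x : ℕ → (Fin k → ℂ) := fun N j => ω j ^ N with hx
  have hcomp : IsCompact (Set.univ.pi fun _ : Fin k => Metric.sphere (0:ℂ) 1) :=
    isCompact_univ_pi fun _ => isCompact_sphere 0 1
  have hmem : ∀ N : ℕ, x N ∈ Set.univ.pi fun _ : Fin k => Metric.sphere (0:ℂ) 1 := by
    intro N j _
    simp only [hx, Metric.mem_sphere, Complex.dist_eq, sub_zero, map_pow, norm_pow, hω, one_pow]
  obtain ⟨a, -, φ, hφ, hconv⟩ := hcomp.tendsto_subseq hmem
  have hcauchy := hconv.cauchySeq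
  rw [Metric.cauchySeq_iff] at hcauchy
  have hkpos : (0:ℝ) < k := by exact_mod_cast hk
  obtain ⟨M, hM⟩ := hcauchy (1/(2*k)) (by positivity)
  obtain ⟨N₀, hN₀⟩ := Metric.tendsto_atTop.mp h (1/2) (by norm_num)
  -- pick m' large
  obtain ⟨m', hm'1, hm'2⟩ : ∃ m', M ≤ m' ∧ φ M + N₀ ≤ φ m' := by
    refine ⟨max M (φ M + N₀), le_max_left _ _, ?_⟩
    exact le_trans (le_max_right _ _) (hφ.id_le _)
  set d : ℕ := φ m' - φ M with hd
  have hdN : N₀ ≤ d := by omega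
  have hsplit : φ m' = φ M + d := by omega
  have hcoord : ∀ j, ‖ω j ^ d - 1‖ < 1/(2*k) := by
    intro j
    have h1 := hM m' hm'1 M le_rfl
    have h2 : dist (x (φ m') j) (x (φ M) j) ≤ dist (x (φ m')) (x (φ M)) :=
      dist_le_pi_dist _ _ j
    have h3 : dist (x (φ m') j) (x (φ M) j) < 1/(2*k) := lt_of_le_of_lt h2 h1
    have : x (φ m') j - x (φ M) j = ω j ^ φ M * (ω j ^ d - 1) := by
      simp only [hx, hsplit, pow_add]; ring
    rw [Complex.dist_eq, this, norm_mul, norm_pow, hω, one_pow, one_mul] at h3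
    exact h3
  have hsum : ‖∑ j, ω j ^ d - (k:ℂ)‖ ≤ 1/2 := by
    have : ∑ j, ω j ^ d - (k:ℂ) = ∑ j : Fin k, (ω j ^ d - 1) := by
      rw [Finset.sum_sub_distrib]
      simp
    rw [this]
    calc ‖∑ j : Fin k, (ω j ^ d - 1)‖
        ≤ ∑ j : Fin k, ‖ω j ^ d - 1‖ :=
          norm_sum_le _ _
      _ ≤ ∑ j : Fin k, (1/(2*k) : ℝ) := Finset.sum_le_sum fun j _ => (hcoord j).le
      _ = k * (1/(2*k)) := by simp [Finset.sum_const, mul_comm]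
      _ = 1/2 := by field_simp
  have hlow : (1:ℝ)/2 ≤ ‖∑ j, ω j ^ d‖ := by
    have habs : ‖(k:ℂ)‖ = k := by
      simp
    have htri : ‖(k:ℂ)‖ ≤
        ‖∑ j, ω j ^ d‖ + ‖(k:ℂ) - ∑ j, ω j ^ d‖ := by
      have := norm_add_le (∑ j, ω j ^ d) ((k:ℂ) - ∑ j, ω j ^ d)
      simpa using this
    rw [norm_sub_rev] at htri
    have hk1 : (1:ℝ) ≤ k := by exact_mod_cast hk
    rw [habs] at htri
    linarith
  have hhigh := hN₀ d hdN
  rw [Complex.dist_eq, sub_zero] at hhigh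
  linarith
end

section
/- In the special case P = 0 of the trace identity: if |a| < 1, |b| = 1, and ω_{ij} (j ∈ K_i, finitely many nonempty K_i) are complex numbers of modulus 1 such that Σ_i (-1)^{i(f+1)} a^{-if} Σ_{j∈K_i} ω_{ij}^f = 0 for all integers f ≥ 1, then all the sets K_i are empty. -/
open Filter Metric

lemma exists_large_pow_close (n : ℕ) (ω : Fin n → ℂ) (hω : ∀ j, ‖ω j‖ = 1)
    (ε : ℝ) (hε : 0 < ε) (M : ℕ) :
    ∃ f : ℕ, M ≤ f ∧ 1 ≤ f ∧ ∀ j, ‖ω j ^ f - 1‖ < ε := by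
  set u : ℕ → (Fin n → ℂ) := fun f j => ω j ^ f with hu
  have hmem : ∀ f, u f ∈ closedBall (0 : Fin n → ℂ) 1 := by
    intro f
    rw [mem_closedBall, dist_zero_right, pi_norm_le_iff_of_nonneg zero_le_one]
    intro j
    simp only [u, norm_pow, hω j, one_pow, le_refl]
  obtain ⟨x, -, φ, hφ, hconv⟩ :=
    tendsto_subseq_of_bounded (isBounded_closedBall (x := (0 : Fin n → ℂ)) (r := 1)) hmem
  have hc : CauchySeq (u ∘ φ) := hconv.cauchySeq
  obtain ⟨N, hN⟩ := Metric.cauchySeq_iff.1 hc ε hε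
  have hle : ∀ p k : ℕ, φ p + k ≤ φ (p + k) := by
    intro p k
    induction k with
    | zero => simp
    | succ k ih =>
      have h2 : φ (p + k) < φ (p + (k + 1)) := hφ (Nat.lt_succ_self _)
      omega
  refine ⟨φ (N + M + 1) - φ N, ?_, ?_, ?_⟩
  · have h1 : φ N + (M + 1) ≤ φ (N + M + 1) := hle N (M + 1)
    have h2 : N ≤ φ N := hφ.le_apply
    omega
  · have h1 : φ N + (M + 1) ≤ φ (N + M + 1) := hle N (M + 1); omega
  · intro j
    have hne : ω j ≠ 0 := by
      intro h; have := hω j; rw [h] at this; simp at this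
    have hle' : φ N ≤ φ (N + M + 1) := (hφ (by omega)).le
    have hpow : ω j ^ (φ (N + M + 1) - φ N) = ω j ^ (φ (N + M + 1)) / ω j ^ (φ N) :=
      pow_sub₀ (ω j) hne hle'
    have habs : ‖ω j ^ (φ N)‖ = 1 := by rw [norm_pow, hω j, one_pow]
    have : ‖ω j ^ (φ (N + M + 1) - φ N) - 1‖
        = ‖ω j ^ (φ (N + M + 1)) - ω j ^ (φ N)‖ := by
      rw [hpow]
      rw [show ω j ^ (φ (N + M + 1)) / ω j ^ (φ N) - 1
          = (ω j ^ (φ (N + M + 1)) - ω j ^ (φ N)) / ω j ^ (φ N) by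
        field_simp]
      rw [norm_div, habs, div_one]
    rw [this]
    calc ‖ω j ^ (φ (N + M + 1)) - ω j ^ (φ N)‖
        = dist (u (φ (N + M + 1)) j) (u (φ N) j) := by
          simp [u, Complex.dist_eq]
      _ ≤ dist ((u ∘ φ) (N + M + 1)) ((u ∘ φ) N) := dist_le_pi_dist _ _ j
      _ < ε := hN _ (by omega) _ le_rfl

/-- Special case `P = 0` of the trace identity: if `|a| < 1` (`a ≠ 0`), `|b| = 1`, and
`Σ_i (-1)^{i(f+1)} a^{-if} Σ_{j ∈ K_i} ω_{ij}^f = 0` for all integers `f ≥ 1`, where all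
`|ω_{ij}| = 1` and only finitely many `K_i` are nonempty, then all the sets `K_i` are empty. -/
theorem stmt_7 (a b : ℂ) (ha : ‖a‖ < 1) (ha0 : a ≠ 0) (hb : ‖b‖ = 1)
    (S : Finset ℤ) (K : ℤ → ℕ) (hK : ∀ i ∉ S, K i = 0)
    (ω : (i : ℤ) → Fin (K i) → ℂ) (hω : ∀ i j, ‖ω i j‖ = 1)
    (hid : ∀ f : ℕ, 1 ≤ f →
      ∑ i ∈ S, (-1 : ℂ) ^ (i * ((f : ℤ) + 1)) * a ^ (-(i : ℤ) * (f : ℤ)) *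
          ∑ j, ω i j ^ f = 0) :
    ∀ i, K i = 0 := by
  by_contra hcon
  push_neg at hcon
  obtain ⟨i1, hi1⟩ := hcon
  set T : Finset ℤ := S.filter (fun i => K i ≠ 0) with hTdef
  have hTne : T.Nonempty := ⟨i1, by
    simp only [T, Finset.mem_filter]
    refine ⟨?_, hi1⟩
    by_contra h
    exact hi1 (hK i1 h)⟩
  set i0 : ℤ := T.max' hTne with hi0def
  have hi0T : i0 ∈ T := T.max'_mem hTne
  have hi0S : i0 ∈ S := (Finset.mem_filter.1 hi0T).1
  have hKi0 : K i0 ≠ 0 := (Finset.mem_filter.1 hi0T).2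
  have hmax : ∀ i ∈ T, i ≤ i0 := fun i hi => T.le_max' i hi
  set r : ℝ := ‖a‖ with hrdef
  have hr0 : 0 < r := by
    simpa [hrdef] using (norm_pos_iff.mpr ha0)
  have hr1 : r < 1 := ha
  set C : ℝ := ∑ i ∈ S, (K i : ℝ) with hCdef
  have hCK : (K i0 : ℝ) ≤ C := by
    exact Finset.single_le_sum (f := fun i => (K i : ℝ)) (fun i _ => by positivity) hi0S
  have hC0 : 0 < C := lt_of_lt_of_le (by exact_mod_cast Nat.pos_of_ne_zero hKi0) hCK
  -- abs of the inner sums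
  have hT : ∀ (i : ℤ) (f : ℕ), ‖∑ j, ω i j ^ f‖ ≤ (K i : ℝ) := by
    intro i f
    calc ‖∑ j, ω i j ^ f‖ ≤ ∑ j, ‖ω i j ^ f‖ :=
          norm_sum_le _ _
      _ = (K i : ℝ) := by simp [norm_pow, hω]
  -- key upper bound
  have hbound : ∀ f : ℕ, 1 ≤ f → ‖∑ j, ω i0 j ^ f‖ ≤ C * r ^ f := by
    intro f hf
    have hsum := hid f hf
    set g : ℤ → ℂ := fun i => (-1 : ℂ) ^ (i * ((f : ℤ) + 1)) * a ^ (-(i : ℤ) * (f : ℤ)) *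
        ∑ j, ω i j ^ f with hg
    have hsplit : g i0 + ∑ i ∈ S.erase i0, g i = 0 := by
      rw [Finset.add_sum_erase S g hi0S]; exact hsum
    have habsg : ∀ i, ‖g i‖ = r ^ (-(i : ℤ) * (f : ℤ)) * ‖∑ j, ω i j ^ f‖ := by
      intro i
      simp only [hg, norm_mul, norm_zpow, norm_neg, norm_one, one_zpow, one_mul, ← hrdef]
    have hgi0 : g i0 = -∑ i ∈ S.erase i0, g i := by linear_combination hsplit
    have h1 : ‖g i0‖ ≤ ∑ i ∈ S.erase i0, r ^ (-(i0 : ℤ) * f + f) * (K i : ℝ) := by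
      rw [hgi0, norm_neg]
      refine (norm_sum_le _ _).trans (Finset.sum_le_sum ?_)
      intro i hi
      rw [habsg i]
      by_cases hKi : K i = 0
      · have : (∑ j, ω i j ^ f) = 0 := by
          have : IsEmpty (Fin (K i)) := by rw [hKi]; infer_instance
          simp
        rw [this, norm_zero, mul_zero]
        positivity
      · have hiT : i ∈ T := Finset.mem_filter.2 ⟨Finset.mem_of_mem_erase hi, hKi⟩
        have hilt : i < i0 := lt_of_le_of_ne (hmax i hiT) (Finset.ne_of_mem_erase hi)
        have hexp : (-(i0 : ℤ) * f + f) ≤ (-(i : ℤ) * f) := by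
          have : (1 : ℤ) ≤ (f : ℤ) := by exact_mod_cast hf
          nlinarith
        have hzle : r ^ (-(i : ℤ) * f) ≤ r ^ (-(i0 : ℤ) * f + f) :=
          zpow_le_zpow_right_of_le_one₀ hr0 hr1.le hexp
        calc r ^ (-(i : ℤ) * f) * ‖∑ j, ω i j ^ f‖
            ≤ r ^ (-(i : ℤ) * f) * (K i : ℝ) := by
              have := hT i f
              have hp : (0:ℝ) < r ^ (-(i : ℤ) * f) := zpow_pos hr0 _
              nlinarith
          _ ≤ r ^ (-(i0 : ℤ) * f + f) * (K i : ℝ) := by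
              have hKnn : (0:ℝ) ≤ (K i : ℝ) := by positivity
              nlinarith
    have h2 : ∑ i ∈ S.erase i0, r ^ (-(i0 : ℤ) * f + f) * (K i : ℝ)
        ≤ r ^ (-(i0 : ℤ) * f) * (r ^ f * C) := by
      have : ∑ i ∈ S.erase i0, r ^ (-(i0 : ℤ) * f + f) * (K i : ℝ)
          = r ^ (-(i0 : ℤ) * f) * (r ^ f * ∑ i ∈ S.erase i0, (K i : ℝ)) := by
        rw [Finset.mul_sum, Finset.mul_sum]
        refine Finset.sum_congr rfl fun i _ => ?_
        rw [zpow_add₀ (ne_of_gt hr0), zpow_natCast]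
        ring
      rw [this]
      have hsub : ∑ i ∈ S.erase i0, (K i : ℝ) ≤ C := by
        rw [hCdef]
        refine Finset.sum_le_sum_of_subset_of_nonneg (Finset.erase_subset _ _)
          (fun i _ _ => by positivity)
      have hsnn : (0:ℝ) ≤ ∑ i ∈ S.erase i0, (K i : ℝ) := by positivity
      gcongr
    have h3 : r ^ (-(i0 : ℤ) * f) * ‖∑ j, ω i0 j ^ f‖
        ≤ r ^ (-(i0 : ℤ) * f) * (r ^ f * C) := by
      rw [← habsg i0]; exact h1.trans h2
    have hp1 : (0:ℝ) < r ^ (-(i0 : ℤ) * f) := zpow_pos hr0 _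
    have := (mul_le_mul_iff_right₀ hp1).1 h3
    linarith
  -- choose n with C * r^n < K i0 / 2
  obtain ⟨n, hn⟩ := exists_pow_lt_of_lt_one
    (show (0:ℝ) < (K i0 : ℝ) / 2 / C by positivity) hr1
  obtain ⟨f, hfM, hf1, hclose⟩ :=
    exists_large_pow_close (K i0) (ω i0) (hω i0) (1/2) one_half_pos n
  -- lower bound for |T(f)|
  set Tf : ℂ := ∑ j, ω i0 j ^ f with hTf
  set D : ℂ := ∑ j : Fin (K i0), (ω i0 j ^ f - 1) with hD
  have hKD : (K i0 : ℂ) = Tf - D := by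
    rw [hTf, hD, ← Finset.sum_sub_distrib]
    simp
  have hlow1 : (K i0 : ℝ) ≤ ‖Tf‖ + ‖D‖ := by
    calc (K i0 : ℝ) = ‖(K i0 : ℂ)‖ := by simp
      _ = ‖Tf - D‖ := by rw [hKD]
      _ ≤ ‖Tf‖ + ‖D‖ := by
          simpa [sub_eq_add_neg] using norm_add_le Tf (-D)
  have hne : (Finset.univ : Finset (Fin (K i0))).Nonempty :=
    Finset.univ_nonempty_iff.2 ⟨⟨0, Nat.pos_of_ne_zero hKi0⟩⟩
  have hDlt : ‖D‖ < (K i0 : ℝ) / 2 := by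
    calc ‖D‖ ≤ ∑ j, ‖ω i0 j ^ f - 1‖ := norm_sum_le _ _
      _ < ∑ _j : Fin (K i0), (1/2 : ℝ) :=
          Finset.sum_lt_sum_of_nonempty hne (fun j _ => hclose j)
      _ = (K i0 : ℝ) / 2 := by
          simp [Finset.sum_const, Finset.card_univ]
          ring
  have hup : ‖Tf‖ < (K i0 : ℝ) / 2 := by
    have hb1 : ‖Tf‖ ≤ C * r ^ f := hbound f hf1
    have hb2 : r ^ f ≤ r ^ n := pow_le_pow_of_le_one hr0.le hr1.le hfM
    have : C * r ^ n < (K i0 : ℝ) / 2 := by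
      have h := (lt_div_iff₀ hC0).1 hn
      nlinarith
    nlinarith
  linarith
end

section
/- For any α ∈ Z^+ and any n ∈ ℤ, there are only finitely many convex paths p = (x_1, ..., x_l) in Z^+ of total weight α satisfying μ(x_1) ≥ n. -/
/-- `Z⁺ = {(r,d) ∈ ℤ² : r > 0, or r = 0 and d > 0}`. -/
def Zpos (x : ℤ × ℤ) : Prop := 0 < x.1 ∨ (x.1 = 0 ∧ 0 < x.2)

/-- `slopeLE x y` means `μ(x) ≤ μ(y)` (cross multiplication, valid on `Z⁺`). -/
def slopeLE (x y : ℤ × ℤ) : Prop := x.2 * y.1 ≤ y.2 * x.1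

/-- `slopeEQ x y` means `μ(x) = μ(y)`. -/
def slopeEQ (x y : ℤ × ℤ) : Prop := x.2 * y.1 = y.2 * x.1

/-- A convex path: a finite sequence of elements of `Z⁺` with weakly increasing slopes,
where consecutive entries of equal slope have weakly decreasing degree coordinate. -/
def ConvexPath (p : List (ℤ × ℤ)) : Prop :=
  (∀ x ∈ p, Zpos x) ∧
  p.Chain' fun x y => slopeLE x y ∧ (slopeEQ x y → y.2 ≤ x.2)

private lemma zpos_fst_nonneg {x : ℤ × ℤ} (h : Zpos x) : 0 ≤ x.1 := by
  rcases h with h | ⟨h, _⟩ <;> omega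

private lemma step_slope (n : ℤ) {y z : ℤ × ℤ} (hy : Zpos y) (hz : Zpos z)
    (h1 : n * y.1 ≤ y.2) (h2 : slopeLE y z) : n * z.1 ≤ z.2 := by
  have hz1 : 0 ≤ z.1 := zpos_fst_nonneg hz
  unfold slopeLE at h2
  rcases hy with hy | ⟨hy1, hy2⟩
  · nlinarith [mul_le_mul_of_nonneg_right h1 hz1]
  · rw [hy1] at h2
    simp at h2
    have hz10 : z.1 = 0 := le_antisymm (nonpos_of_mul_nonpos_right ?_ hy2) hz1
    · rcases hz with hz | ⟨_, hz2⟩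
      · omega
      · rw [hz10]; simpa using le_of_lt hz2
    · nlinarith

private lemma all_slope (n : ℤ) (p : List (ℤ × ℤ)) (hpos : ∀ x ∈ p, Zpos x)
    (hchain : p.Chain' fun x y => slopeLE x y ∧ (slopeEQ x y → y.2 ≤ x.2))
    (hhead : ∀ x ∈ p.head?, n * x.1 ≤ x.2) : ∀ x ∈ p, n * x.1 ≤ x.2 := by
  induction p with
  | nil => simp
  | cons a p ih =>
    have ha : n * a.1 ≤ a.2 := hhead a (by simp)
    replace hchain := List.isChain_cons.mp hchain
    intro x hx
    rcases List.mem_cons.mp hx with rfl | hx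
    · exact ha
    · refine ih (fun y hy => hpos y (List.mem_cons_of_mem _ hy)) hchain.2 ?_ x hx
      intro b hb
      exact step_slope n (hpos a (by simp))
        (hpos b (List.mem_cons_of_mem _ (List.mem_of_mem_head? hb))) ha (hchain.1 b hb).1

private lemma mem_le_sum (l : List ℤ) (h : ∀ x ∈ l, 0 ≤ x) : ∀ x ∈ l, x ≤ l.sum := by
  induction l with
  | nil => simp
  | cons a l ih =>
    intro x hx
    have hs : 0 ≤ l.sum := List.sum_nonneg fun y hy => h y (List.mem_cons_of_mem _ hy)
    rcases List.mem_cons.mp hx with rfl | hx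
    · simp; omega
    · have := ih (fun y hy => h y (List.mem_cons_of_mem _ hy)) x hx
      have := h a (by simp)
      simp; omega

private lemma length_le_sum (l : List ℤ) (h : ∀ x ∈ l, 1 ≤ x) : (l.length : ℤ) ≤ l.sum := by
  induction l with
  | nil => simp
  | cons a l ih =>
    have := ih (fun y hy => h y (List.mem_cons_of_mem _ hy))
    have := h a (by simp)
    simp
    omega

private lemma sum_lin (a b : ℤ) (p : List (ℤ × ℤ)) :
    (p.map fun x => a * x.1 + b * x.2).sum = a * p.sum.1 + b * p.sum.2 := by
  induction p with
  | nil => simp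
  | cons x p ih => simp [ih, Prod.fst_add, Prod.snd_add]; ring

/-- For any `α ∈ Z⁺` and `n ∈ ℤ`, there are only finitely many convex paths of total weight
`α` whose first entry has slope `≥ n`. -/
theorem stmt_10 (α : ℤ × ℤ) (hα : Zpos α) (n : ℤ) :
    {p : List (ℤ × ℤ) | ConvexPath p ∧ p.sum = α ∧
      ∀ x ∈ p.head?, n * x.1 ≤ x.2}.Finite := by
  set L : ℕ := ((1 - n) * α.1 + α.2).toNat with hL
  set s : Set (ℤ × ℤ) := Set.Icc (0, -(|n| * α.1 + |α.2|)) (α.1, |n| * α.1 + |α.2|) with hs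
  have hsfin : s.Finite := Set.finite_Icc _ _
  have hbig : {l : List (ℤ × ℤ) | l.length ≤ L ∧ ∀ x ∈ l, x ∈ s}.Finite := by
    have := hsfin.to_subtype
    have h1 : {l : List s | l.length ≤ L}.Finite := List.finite_length_le s L
    apply (h1.image (List.map Subtype.val)).subset
    intro l hl
    refine ⟨l.attachWith (· ∈ s) hl.2, ?_, ?_⟩
    · simpa using hl.1
    · simpa using List.attach_map_subtype_val l
  apply hbig.subset
  rintro p ⟨⟨hpos, hchain⟩, hsum, hhead⟩
  have hslope : ∀ x ∈ p, n * x.1 ≤ x.2 := all_slope n p hpos hchain hhead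
  have hfst : ∀ x ∈ p, x.1 ≤ α.1 := by
    intro x hx
    have h1 : ∀ y ∈ p.map Prod.fst, 0 ≤ y := by
      simp only [List.mem_map]
      rintro y ⟨z, hz, rfl⟩
      exact zpos_fst_nonneg (hpos z hz)
    have h2 : (p.map Prod.fst).sum = α.1 := by
      have := sum_lin 1 0 p
      simp at this
      rw [← hsum]
      simpa using this
    have := mem_le_sum _ h1 x.1 (List.mem_map.mpr ⟨x, hx, rfl⟩)
    omega
  have hα1 : 0 ≤ α.1 := zpos_fst_nonneg hα
  have hg : ∀ x ∈ p, x.2 - n * x.1 ≤ α.2 - n * α.1 := by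
    intro x hx
    have h1 : ∀ y ∈ p.map (fun x => (-n) * x.1 + 1 * x.2), 0 ≤ y := by
      simp only [List.mem_map]
      rintro y ⟨z, hz, rfl⟩
      have := hslope z hz
      simp; omega
    have h2 := sum_lin (-n) 1 p
    rw [hsum] at h2
    have := mem_le_sum _ h1 _ (List.mem_map.mpr ⟨x, hx, rfl⟩)
    rw [h2] at this
    simp at this ⊢
    omega
  constructor
  · -- length bound
    have h1 : ∀ y ∈ p.map (fun x => (1 - n) * x.1 + 1 * x.2), 1 ≤ y := by
      simp only [List.mem_map]
      rintro y ⟨z, hz, rfl⟩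
      have hsl := hslope z hz
      rcases hpos z hz with hz1 | ⟨hz1, hz2⟩
      · nlinarith
      · rw [hz1] at hsl ⊢; simp at hsl ⊢; omega
    have h2 := sum_lin (1 - n) 1 p
    rw [hsum] at h2
    have h3 := length_le_sum _ h1
    rw [h2] at h3
    simp at h3
    omega
  · -- membership in the box
    intro x hx
    have hx1 : 0 ≤ x.1 := zpos_fst_nonneg (hpos x hx)
    have hx1' := hfst x hx
    have hsl := hslope x hx
    have hgx := hg x hx
    simp only [hs, Set.mem_Icc, Prod.le_def]
    have habs1 := le_abs_self n
    have habs2 := neg_abs_le n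
    have habs3 := le_abs_self α.2
    have habs4 := neg_abs_le α.2
    refine ⟨⟨hx1, ?_⟩, ⟨hx1', ?_⟩⟩
    · -- lower bound on x.2
      nlinarith [mul_le_mul_of_nonneg_right habs2 hx1, mul_le_mul_of_nonneg_left hx1' (abs_nonneg n)]
    · -- upper bound on x.2
      nlinarith [mul_le_mul_of_nonneg_right habs2 (sub_nonneg.mpr hx1'), mul_nonneg (abs_nonneg n) hx1]
end

section
/- Let Ê be a topologically free R-module with topological basis {β_p}_{p∈I}, R = ℂ[σ^{±1/2}, σ̄^{±1/2}], equipped with a ℂ-antilinear involution x ↦ x̄ sending σ ↦ σ^{-1}, σ̄ ↦ σ̄^{-1} and satisfying β̄_p ∈ β_p + ∏_{q≺p} R β_q for a partial order ≺ with the property that each p dominates only elements in a 'locally finite' way. Let R^> ⊂ R be the ℂ-span of monomials σ^a σ̄^b with a+b < 0. Then for every p ∈ I there exists a unique element b_p with b̄_p = b_p and b_p ∈ β_p + ∏_{q≺p} R^> β_q. -/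
/-- The ring `R = ℂ[σ^{±1/2}, σ̄^{±1/2}]`, realized as the Laurent polynomial ring on the
exponent lattice `ℤ × ℤ`, the exponent `(m,n)` standing for `σ^{m/2} σ̄^{n/2}`. -/
abbrev Rhalf : Type := AddMonoidAlgebra ℂ (ℤ × ℤ)

/-- The ℂ-antilinear bar involution of `R`: complex conjugation on coefficients together with
`σ ↦ σ⁻¹`, `σ̄ ↦ σ̄⁻¹`. -/
noncomputable def barR (P : Rhalf) : Rhalf :=
  P.coeff.sum fun e c => AddMonoidAlgebra.single (-e) ((starRingEnd ℂ) c)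

/-- Membership in `R^>`, the ℂ-span of the monomials `σ^a σ̄^b` with `a + b < 0`. -/
def memRgt (P : Rhalf) : Prop := ∀ e ∈ P.coeff.support, e.1 + e.2 < 0

namespace KLaux

open Finsupp

lemma barR_single (a : ℤ × ℤ) (b : ℂ) :
    barR (AddMonoidAlgebra.single a b) = AddMonoidAlgebra.single (-a) ((starRingEnd ℂ) b) := by
  rw [barR]
  exact Finsupp.sum_single_index (by simp)

lemma barR_zero : barR 0 = 0 := by simp [barR]

lemma barR_add (P Q : Rhalf) : barR (P + Q) = barR P + barR Q := by
  rw [barR, barR, barR]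
  exact Finsupp.sum_add_index' (by simp) (by intro a b₁ b₂; simp [AddMonoidAlgebra.single_add])

lemma barR_apply (P : Rhalf) (e : ℤ × ℤ) : (barR P).coeff e = (starRingEnd ℂ) (P.coeff (-e)) := by
  induction P using AddMonoidAlgebra.induction_linear with
  | zero => simp [barR_zero]
  | add f g hf hg => rw [barR_add, AddMonoidAlgebra.coeff_add, Finsupp.add_apply, hf, hg, AddMonoidAlgebra.coeff_add, Finsupp.add_apply, map_add]
  | single a b =>
    rw [barR_single]
    rcases eq_or_ne a (-e) with h | h
    · subst h; simp
    · rw [AddMonoidAlgebra.coeff_single, AddMonoidAlgebra.coeff_single, Finsupp.single_apply, Finsupp.single_apply, if_neg, if_neg h, map_zero]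
      exact fun hh => h (neg_eq_iff_eq_neg.mp hh)

lemma barR_mul (P Q : Rhalf) : barR (P * Q) = barR P * barR Q := by
  induction P using AddMonoidAlgebra.induction_linear with
  | zero => simp [barR_zero]
  | add f g hf hg => rw [add_mul, barR_add, hf, hg, barR_add, add_mul]
  | single a b =>
    induction Q using AddMonoidAlgebra.induction_linear with
    | zero => simp [barR_zero]
    | add f g hf hg => rw [mul_add, barR_add, hf, hg, barR_add, mul_add]
    | single c d =>
      rw [AddMonoidAlgebra.single_mul_single, barR_single, barR_single, barR_single,
        AddMonoidAlgebra.single_mul_single, neg_add, map_mul]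

lemma barR_barR (P : Rhalf) : barR (barR P) = P := by
  induction P using AddMonoidAlgebra.induction_linear with
  | zero => simp [barR_zero]
  | add f g hf hg => rw [barR_add, barR_add, hf, hg]
  | single a b => rw [barR_single, barR_single, neg_neg, Complex.conj_conj]

lemma barR_one : barR 1 = 1 := by
  rw [AddMonoidAlgebra.one_def, barR_single]; simp

noncomputable def barRHom : Rhalf →+ Rhalf := AddMonoidHom.mk' barR barR_add

lemma barR_eq_zero {P : Rhalf} (h : barR P = 0) : P = 0 := by
  rw [← barR_barR P, h, barR_zero]



noncomputable def swapRH : Rhalf →+* Rhalf :=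
  AddMonoidAlgebra.mapDomainRingHom ℂ ((AddMonoidHom.snd ℤ ℤ).prod (AddMonoidHom.fst ℤ ℤ))

lemma swap_invol : Function.Involutive
    (fun e : ℤ × ℤ => ((AddMonoidHom.snd ℤ ℤ).prod (AddMonoidHom.fst ℤ ℤ)) e) := by
  intro e; rfl

lemma swapRH_apply (P : Rhalf) (e : ℤ × ℤ) : (swapRH P).coeff e = P.coeff (e.2, e.1) := by
  have h : e = ((AddMonoidHom.snd ℤ ℤ).prod (AddMonoidHom.fst ℤ ℤ)) (e.2, e.1) := rfl
  calc (swapRH P).coeff e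
      = Finsupp.mapDomain (((AddMonoidHom.snd ℤ ℤ).prod (AddMonoidHom.fst ℤ ℤ)) : ℤ × ℤ → ℤ × ℤ)
        P.coeff (((AddMonoidHom.snd ℤ ℤ).prod (AddMonoidHom.fst ℤ ℤ)) (e.2, e.1)) := rfl
    _ = P.coeff (e.2, e.1) := Finsupp.mapDomain_apply swap_invol.injective P.coeff _

noncomputable def cR (P : Rhalf) : Rhalf := AddMonoidAlgebra.ofCoeff (Finsupp.mapRange (starRingEnd ℂ) (map_zero _) P.coeff)

lemma cR_apply (P : Rhalf) (e : ℤ × ℤ) : (cR P).coeff e = (starRingEnd ℂ) (P.coeff e) := rfl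

lemma cR_single (a : ℤ × ℤ) (b : ℂ) :
    cR (AddMonoidAlgebra.single a b) = AddMonoidAlgebra.single a ((starRingEnd ℂ) b) :=
  congrArg AddMonoidAlgebra.ofCoeff Finsupp.mapRange_single

lemma cR_add (P Q : Rhalf) : cR (P + Q) = cR P + cR Q := by
  ext e; rw [cR_apply, AddMonoidAlgebra.coeff_add, AddMonoidAlgebra.coeff_add, Finsupp.add_apply, Finsupp.add_apply, map_add, cR_apply, cR_apply]

lemma cR_zero : cR 0 = 0 := by ext e; simp [cR_apply]

lemma cR_mul (P Q : Rhalf) : cR (P * Q) = cR P * cR Q := by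
  induction P using AddMonoidAlgebra.induction_linear with
  | zero => simp [cR_zero]
  | add f g hf hg => rw [add_mul, cR_add, hf, hg, cR_add, add_mul]
  | single a b =>
    induction Q using AddMonoidAlgebra.induction_linear with
    | zero => simp [cR_zero]
    | add f g hf hg => rw [mul_add, cR_add, hf, hg, cR_add, mul_add]
    | single c d =>
      rw [AddMonoidAlgebra.single_mul_single, cR_single, cR_single, cR_single,
        AddMonoidAlgebra.single_mul_single, map_mul]

/-- `σ ↔ σ̄`-symmetric with real coefficients. -/
def Good (P : Rhalf) : Prop :=
  (∀ e : ℤ × ℤ, P.coeff (e.2, e.1) = P.coeff e) ∧ (∀ e : ℤ × ℤ, (starRingEnd ℂ) (P.coeff e) = P.coeff e)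

lemma good_iff (P : Rhalf) : Good P ↔ swapRH P = P ∧ cR P = P := by
  constructor
  · rintro ⟨h1, h2⟩
    constructor
    · ext e; rw [swapRH_apply, h1]
    · ext e; rw [cR_apply, h2]
  · rintro ⟨h1, h2⟩
    constructor
    · intro e; conv_rhs => rw [← h1]
      rw [swapRH_apply]
    · intro e; conv_rhs => rw [← h2]
      rw [cR_apply]

lemma good_one : Good (1 : Rhalf) := by
  rw [good_iff]; exact ⟨map_one _, by rw [show (1 : Rhalf) = AddMonoidAlgebra.single 0 1 from rfl, cR_single, map_one]⟩

lemma good_zero : Good (0 : Rhalf) := by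
  rw [good_iff]; exact ⟨map_zero _, cR_zero⟩

lemma Good.mul {P Q : Rhalf} (hP : Good P) (hQ : Good Q) : Good (P * Q) := by
  rw [good_iff] at *
  exact ⟨by rw [map_mul, hP.1, hQ.1], by rw [cR_mul, hP.2, hQ.2]⟩

lemma Good.add {P Q : Rhalf} (hP : Good P) (hQ : Good Q) : Good (P + Q) := by
  rw [good_iff] at *
  exact ⟨by rw [map_add, hP.1, hQ.1], by rw [cR_add, hP.2, hQ.2]⟩

lemma Good.barR {P : Rhalf} (hP : Good P) : Good (_root_.barR P) := by
  refine ⟨fun e => ?_, fun e => ?_⟩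
  · rw [barR_apply, barR_apply, show -(e.2, e.1) = ((-e).2, (-e).1) from rfl, hP.1]
  · rw [barR_apply, Complex.conj_conj]
    exact (hP.2 (-e)).symm

lemma good_sum {α : Type*} (s : Finset α) (f : α → Rhalf) (h : ∀ i ∈ s, Good (f i)) :
    Good (∑ i ∈ s, f i) := by
  classical
  induction s using Finset.induction_on with
  | empty => simpa using good_zero
  | insert _ _ hx ih =>
    rw [Finset.sum_insert hx]
    exact (h _ (Finset.mem_insert_self _ _)).add
      (ih fun i hi => h i (Finset.mem_insert_of_mem hi))

def Dpart (P : Rhalf) : Rhalf := AddMonoidAlgebra.ofCoeff (P.coeff.filter (fun e : ℤ × ℤ => e.1 + e.2 < 0))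

lemma Dpart_apply (P : Rhalf) (e : ℤ × ℤ) :
    (Dpart P).coeff e = if e.1 + e.2 < 0 then P.coeff e else 0 := rfl

lemma memRgt_iff (P : Rhalf) : memRgt P ↔ ∀ e : ℤ × ℤ, 0 ≤ e.1 + e.2 → P.coeff e = 0 := by
  constructor
  · intro h e he
    by_contra hne
    exact absurd (h e (Finsupp.mem_support_iff.mpr hne)) (not_lt.mpr he)
  · intro h e he
    by_contra hge
    exact Finsupp.mem_support_iff.mp he (h e (not_lt.mp hge))

lemma memRgt_Dpart (P : Rhalf) : memRgt (Dpart P) := by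
  rw [memRgt_iff]
  intro e he
  rw [Dpart_apply, if_neg (not_lt.mpr he)]

lemma memRgt_zero : memRgt (0 : Rhalf) := by rw [memRgt_iff]; intro e _; rfl

lemma memRgt_sub {P Q : Rhalf} (hP : memRgt P) (hQ : memRgt Q) : memRgt (P - Q) := by
  rw [memRgt_iff] at *
  intro e he
  rw [AddMonoidAlgebra.coeff_sub, Finsupp.sub_apply, hP e he, hQ e he, sub_zero]

lemma cancel {P : Rhalf} (h1 : memRgt P) (h2 : barR P = P) : P = 0 := by
  rw [memRgt_iff] at h1
  ext e
  rcases lt_or_ge (e.1 + e.2) 0 with h | h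
  · have he : (0 : ℤ) ≤ (-e).1 + (-e).2 := by
      have h3 : (-e).1 + (-e).2 = -(e.1 + e.2) := by
        simp only [Prod.fst_neg, Prod.snd_neg]; ring
      omega
    have : (barR P).coeff e = P.coeff e := by rw [h2]
    rw [barR_apply, h1 _ he, map_zero] at this
    rw [← this]; rfl
  · rw [h1 e h]; rfl

lemma solve {P : Rhalf} (hG : Good P) (hA : barR P = -P) :
    Dpart P - barR (Dpart P) = P := by
  have hA' : ∀ f : ℤ × ℤ, (starRingEnd ℂ) (P.coeff (-f)) = -(P.coeff f) := by
    intro f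
    rw [← barR_apply, hA, AddMonoidAlgebra.coeff_neg, Finsupp.neg_apply]
  have hnegsum : ∀ f : ℤ × ℤ, (-f).1 + (-f).2 = -(f.1 + f.2) := by
    intro f; simp only [Prod.fst_neg, Prod.snd_neg]; ring
  ext e
  rw [AddMonoidAlgebra.coeff_sub, Finsupp.sub_apply, Dpart_apply, barR_apply, Dpart_apply]
  rcases lt_trichotomy (e.1 + e.2) 0 with h | h | h
  · rw [if_pos h, if_neg (by rw [hnegsum]; omega), map_zero, sub_zero]
  · rw [if_neg (by omega), if_neg (by rw [hnegsum]; omega), map_zero, sub_zero]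
    have hswap : -e = (e.2, e.1) := by
      have h1 : (-e).1 = e.2 := by simp; omega
      have h2 : (-e).2 = e.1 := by simp; omega
      exact Prod.ext h1 h2
    have e1 : P.coeff (-e) = P.coeff e := by rw [hswap, hG.1]
    have e2 : (starRingEnd ℂ) (P.coeff (-e)) = P.coeff (-e) := hG.2 _
    have e3 : (starRingEnd ℂ) (P.coeff (-e)) = -(P.coeff e) := hA' e
    have e4 : P.coeff e = -(P.coeff e) := by
      calc P.coeff e = P.coeff (-e) := e1.symm
        _ = (starRingEnd ℂ) (P.coeff (-e)) := e2.symm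
        _ = -(P.coeff e) := e3
    have h5 : (2 : ℂ) * P.coeff e = 0 := by linear_combination e4
    exact ((mul_eq_zero.mp h5).resolve_left two_ne_zero).symm
  · rw [if_neg (by omega), if_pos (by rw [hnegsum]; omega), zero_sub, hA' e, neg_neg]

lemma good_Dpart {P : Rhalf} (h : Good P) : Good (Dpart P) := by
  constructor
  · intro e
    rw [Dpart_apply, Dpart_apply]
    by_cases hc : e.1 + e.2 < 0
    · rw [if_pos (show (e.2, e.1).1 + (e.2, e.1).2 < 0 by dsimp; omega), if_pos hc, h.1]
    · rw [if_neg (show ¬((e.2, e.1).1 + (e.2, e.1).2 < 0) by dsimp; omega), if_neg hc]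
  · intro e
    rw [Dpart_apply]
    by_cases hc : e.1 + e.2 < 0
    · rw [if_pos hc]; exact h.2 e
    · rw [if_neg hc, map_zero]

section Main

variable {I : Type*} [DecidableEq I]

attribute [local instance] Classical.propDecidable

noncomputable def klb (prec : I → I → Prop) (hwf : WellFounded fun a b => prec b a)
    (r : I → I → Rhalf) (p : I) : I → Rhalf :=
  hwf.fix fun q ih =>
    if q = p then 1
    else if prec q p then
      Dpart (∑ᶠ s, if h : prec q s then barR (ih s h) * r s q else 0)
    else 0

lemma klb_eq (prec : I → I → Prop) (hwf : WellFounded fun a b => prec b a)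
    (r : I → I → Rhalf) (p : I) (q : I) :
    klb prec hwf r p q = if q = p then 1
      else if prec q p then
        Dpart (∑ᶠ s, if _ : prec q s then barR (klb prec hwf r p s) * r s q else 0)
      else 0 :=
  hwf.fix_eq _ q

lemma klb_self (prec : I → I → Prop) (hwf : WellFounded fun a b => prec b a)
    (r : I → I → Rhalf) (p : I) : klb prec hwf r p p = 1 := by
  rw [klb_eq, if_pos rfl]

lemma klb_notle (prec : I → I → Prop) (hwf : WellFounded fun a b => prec b a)
    (r : I → I → Rhalf) (p : I) {q : I} (h1 : q ≠ p) (h2 : ¬ prec q p) :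
    klb prec hwf r p q = 0 := by
  rw [klb_eq, if_neg h1, if_neg h2]

lemma klb_memRgt (prec : I → I → Prop) (hwf : WellFounded fun a b => prec b a)
    (r : I → I → Rhalf) (p : I) {q : I} (h1 : q ≠ p) :
    memRgt (klb prec hwf r p q) := by
  rw [klb_eq, if_neg h1]
  split
  · exact memRgt_Dpart _
  · exact memRgt_zero

lemma good_r {r : I → I → Rhalf}
    (hsym : ∀ p q (e : ℤ × ℤ), (r p q).coeff (e.2, e.1) = (r p q).coeff e ∧ ∃ x : ℝ, (r p q).coeff e = (x : ℂ))
    (s q : I) : Good (r s q) := by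
  refine ⟨fun e => (hsym s q e).1, fun e => ?_⟩
  obtain ⟨x, hx⟩ := (hsym s q e).2
  rw [hx, Complex.conj_ofReal]

lemma klb_main
    {prec : I → I → Prop} (hirr : ∀ p, ¬ prec p p) (htrans : Transitive prec)
    (hwf : WellFounded fun a b => prec b a)
    {r : I → I → Rhalf}
    (hdiag : ∀ p, r p p = 1)
    (htri : ∀ p q, r p q ≠ 0 → q = p ∨ prec q p)
    (hcol : ∀ q, {s | r s q ≠ 0}.Finite)
    (hinv : ∀ p q, ∑ᶠ s, barR (r p s) * r s q = if q = p then 1 else 0)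
    (hsym : ∀ p q (e : ℤ × ℤ), (r p q).coeff (e.2, e.1) = (r p q).coeff e ∧ ∃ x : ℝ, (r p q).coeff e = (x : ℂ))
    (p : I) :
    ∀ q, Good (klb prec hwf r p q) ∧
      (∑ᶠ s, barR (klb prec hwf r p s) * r s q = klb prec hwf r p q) := by
  intro q0
  refine hwf.induction
    (C := fun q => Good (klb prec hwf r p q) ∧
      (∑ᶠ s, barR (klb prec hwf r p s) * r s q = klb prec hwf r p q)) q0 fun q ih => ?_
  have hself : klb prec hwf r p p = 1 := klb_self prec hwf r p
  -- auxiliary: vanishing of klb off the lower cone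
  have hvanish : ∀ s, s ≠ p → ¬ prec s p → klb prec hwf r p s = 0 :=
    fun s h1 h2 => klb_notle prec hwf r p h1 h2
  by_cases hqp : q = p
  · subst hqp
    refine ⟨by rw [hself]; exact good_one, ?_⟩
    rw [finsum_eq_single _ q ?hzero]
    · rw [hself, hdiag, barR_one, one_mul]
    · intro s hs
      by_cases hr : r s q = 0
      · rw [hr, mul_zero]
      · rcases htri s q hr with h | h
        · exact absurd h.symm hs
        · have hs0 := hvanish s (fun hsp => hirr q (hsp ▸ h)) fun hsq => hirr q (htrans h hsq)
          rw [hs0, barR_zero, zero_mul]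
  by_cases hqpp : prec q p
  swap
  · have hq0 : klb prec hwf r p q = 0 := hvanish q hqp hqpp
    refine ⟨by rw [hq0]; exact good_zero, ?_⟩
    rw [hq0]
    refine finsum_eq_zero_of_forall_eq_zero fun s => ?_
    by_cases hr : r s q = 0
    · rw [hr, mul_zero]
    · rcases htri s q hr with h | h
      · subst h; rw [hq0, barR_zero, zero_mul]
      · have hs0 : klb prec hwf r p s = 0 := by
          refine hvanish s (fun hsp => hqpp (hsp ▸ h)) fun hsq => hqpp (htrans h hsq)
        rw [hs0, barR_zero, zero_mul]
  -- main case : q ≺ p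
  · set b := klb prec hwf r p with hbdef
    set K : Finset I := (hcol q).toFinset with hKdef
    have hK : ∀ s, s ∈ K ↔ r s q ≠ 0 := fun s => (hcol q).mem_toFinset
    have hqK : q ∈ K := (hK q).mpr (by rw [hdiag]; exact one_ne_zero)
    have hprecK : ∀ s ∈ K.erase q, prec q s := by
      intro s hs
      rcases htri s q ((hK s).mp (Finset.mem_of_mem_erase hs)) with h | h
      · exact absurd h.symm (Finset.ne_of_mem_erase hs)
      · exact h
    set c : Rhalf := ∑ s ∈ K.erase q, barR (b s) * r s q with hcdef
    -- the finsum defining b q equals c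
    have hcK : (∑ᶠ s, if _ : prec q s then barR (b s) * r s q else 0) = c := by
      rw [finsum_eq_finset_sum_of_support_subset _
        (s := K.erase q) ?_]
      · exact Finset.sum_congr rfl fun s hs => dif_pos (hprecK s hs)
      · intro s hs
        rw [Function.mem_support] at hs
        by_cases hp : prec q s
        · rw [dif_pos hp] at hs
          have hr : r s q ≠ 0 := fun h => hs (by rw [h, mul_zero])
          exact Finset.mem_coe.mpr (Finset.mem_erase.mpr ⟨fun h => hirr q (h ▸ hp), (hK s).mpr hr⟩)
        · exact absurd (dif_neg hp) hs
    have hbq : b q = Dpart c := by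
      rw [hbdef]
      conv_lhs => rw [klb_eq prec hwf r p q]
      rw [if_neg hqp, if_pos hqpp, ← hbdef, hcK]
    -- goodness of c
    have hGc : Good c := by
      rw [hcdef]
      refine good_sum _ _ fun s hs => ?_
      exact ((ih s (hprecK s hs)).1).barR.mul (good_r hsym s q)
    -- the "barred" involution identity, as a finite sum over K
    have L1 : ∀ t, ∑ s ∈ K, r t s * barR (r s q) = if q = t then 1 else 0 := by
      intro t
      have h0 : barRHom (∑ᶠ s, barR (r t s) * r s q) = barRHom (if q = t then 1 else 0) :=
        congrArg barRHom (hinv t q)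
      have hfin : (Function.support fun s => barR (r t s) * r s q).Finite := by
        refine (hcol q).subset fun s hs => ?_
        rw [Function.mem_support] at hs
        exact fun h => hs (by rw [h, mul_zero])
      rw [AddMonoidHom.map_finsum barRHom hfin] at h0
      have h1 : ∀ s, barRHom (barR (r t s) * r s q) = r t s * barR (r s q) := by
        intro s
        show barR (barR (r t s) * r s q) = _
        rw [barR_mul, barR_barR]
      simp only [h1] at h0
      have h2 : barRHom (if q = t then 1 else 0) = (if q = t then (1 : Rhalf) else 0) := by
        show barR _ = _
        split
        · exact barR_one
        · exact barR_zero
      rw [h2] at h0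
      rw [← h0]
      refine (finsum_eq_finset_sum_of_support_subset _ ?_).symm
      intro s hs
      rw [Function.mem_support] at hs
      have hr : r s q ≠ 0 := by
        intro h
        exact hs (by rw [h, barR_zero, mul_zero])
      exact Finset.mem_coe.mpr ((hK s).mpr hr)
    -- the big index set
    set T : Finset I := K ∪ (K.erase q).biUnion (fun s => (hcol s).toFinset) with hTdef
    have hKT : K ⊆ T := Finset.subset_union_left
    have hqT : q ∈ T := hKT hqK
    have hbs : ∀ s ∈ K.erase q, b s = ∑ t ∈ T, barR (b t) * r t s := by
      intro s hs
      have h2 := (ih s (hprecK s hs)).2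
      rw [← h2]
      refine finsum_eq_finset_sum_of_support_subset _ fun t ht => ?_
      rw [Function.mem_support] at ht
      have hr : r t s ≠ 0 := fun h => ht (by rw [h, mul_zero])
      refine Finset.mem_coe.mpr (Finset.mem_union_right _ (Finset.mem_biUnion.mpr ?_))
      exact ⟨s, hs, (hcol s).mem_toFinset.mpr hr⟩
    have hbarc : barR c = -c := by
      have h1 : barR c = ∑ s ∈ K.erase q, b s * barR (r s q) := by
        have h1a : barRHom c = ∑ s ∈ K.erase q, barRHom (barR (b s) * r s q) := by
          rw [hcdef]; exact map_sum barRHom _ _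
        have h1b : ∀ s, barRHom (barR (b s) * r s q) = b s * barR (r s q) := by
          intro s
          show barR (barR (b s) * r s q) = _
          rw [barR_mul, barR_barR]
        calc barR c = barRHom c := rfl
          _ = ∑ s ∈ K.erase q, barRHom (barR (b s) * r s q) := h1a
          _ = ∑ s ∈ K.erase q, b s * barR (r s q) := Finset.sum_congr rfl fun s _ => h1b s
      calc barR c = ∑ s ∈ K.erase q, ∑ t ∈ T, barR (b t) * r t s * barR (r s q) := by
              rw [h1]
              refine Finset.sum_congr rfl fun s hs => ?_
              rw [hbs s hs, Finset.sum_mul]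
        _ = ∑ t ∈ T, ∑ s ∈ K.erase q, barR (b t) * r t s * barR (r s q) := Finset.sum_comm
        _ = ∑ t ∈ T, barR (b t) * ∑ s ∈ K.erase q, r t s * barR (r s q) := by
              refine Finset.sum_congr rfl fun t _ => ?_
              rw [Finset.mul_sum]
              exact Finset.sum_congr rfl fun s _ => mul_assoc _ _ _
        _ = ∑ t ∈ T, barR (b t) * ((if q = t then 1 else 0) - r t q) := by
              refine Finset.sum_congr rfl fun t _ => ?_
              congr 1
              have h3 := Finset.add_sum_erase K (fun s => r t s * barR (r s q)) hqK
              simp only [hdiag, barR_one, mul_one, L1 t] at h3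
              rw [eq_sub_iff_add_eq']
              exact h3
        _ = (∑ t ∈ T, barR (b t) * (if q = t then 1 else 0)) - ∑ t ∈ T, barR (b t) * r t q := by
              rw [← Finset.sum_sub_distrib]
              exact Finset.sum_congr rfl fun t _ => mul_sub _ _ _
        _ = barR (b q) - (barR (b q) + c) := by
              congr 1
              · rw [Finset.sum_eq_single q]
                · rw [if_pos rfl, mul_one]
                · intro t _ ht
                  rw [if_neg fun h => ht h.symm, mul_zero]
                · intro h; exact absurd hqT h
              · rw [← Finset.sum_subset hKT (fun t _ ht => by
                  rw [not_ne_iff.mp fun h => ht ((hK t).mpr h), mul_zero])]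
                rw [← Finset.add_sum_erase K _ hqK, hdiag, mul_one, ← hcdef]
        _ = -c := by ring
    have hGbq : Good (b q) := by
      rw [hbq]; exact good_Dpart hGc
    have hsol := solve hGc hbarc
    have hbarbq : barR (b q) = b q - c := by
      rw [hbq]; linear_combination -hsol
    refine ⟨hGbq, ?_⟩
    have hsum : (∑ᶠ s, barR (b s) * r s q) = ∑ s ∈ K, barR (b s) * r s q := by
      refine finsum_eq_finset_sum_of_support_subset _ fun s hs => ?_
      rw [Function.mem_support] at hs
      have hr : r s q ≠ 0 := fun h => hs (by rw [h, mul_zero])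
      exact Finset.mem_coe.mpr ((hK s).mpr hr)
    rw [hsum, ← Finset.add_sum_erase K _ hqK, hdiag, mul_one, ← hcdef, hbarbq]
    ring


lemma barR_sub (P Q : Rhalf) : barR (P - Q) = barR P - barR Q :=
  map_sub barRHom P Q

lemma kl_unique
    {prec : I → I → Prop} (hirr : ∀ p, ¬ prec p p) (htrans : Transitive prec)
    (hwf : WellFounded fun a b => prec b a)
    {r : I → I → Rhalf}
    (hdiag : ∀ p, r p p = 1)
    (htri : ∀ p q, r p q ≠ 0 → q = p ∨ prec q p)
    (hcol : ∀ q, {s | r s q ≠ 0}.Finite)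
    (p : I) {b1 b2 : I → Rhalf}
    (h1p : b1 p = 1) (h1m : ∀ q, q ≠ p → memRgt (b1 q))
    (h1e : ∀ q, ∑ᶠ s, barR (b1 s) * r s q = b1 q)
    (h2p : b2 p = 1) (h2m : ∀ q, q ≠ p → memRgt (b2 q))
    (h2e : ∀ q, ∑ᶠ s, barR (b2 s) * r s q = b2 q) : b1 = b2 := by
  funext q0
  refine hwf.induction (C := fun q => b1 q = b2 q) q0 fun q ih => ?_
  by_cases hqp : q = p
  · subst hqp; rw [h1p, h2p]
  · set K : Finset I := (hcol q).toFinset with hKdef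
    have hK : ∀ s, s ∈ K ↔ r s q ≠ 0 := fun s => (hcol q).mem_toFinset
    have hqK : q ∈ K := (hK q).mpr (by rw [hdiag]; exact one_ne_zero)
    have hprecK : ∀ s ∈ K.erase q, prec q s := by
      intro s hs
      rcases htri s q ((hK s).mp (Finset.mem_of_mem_erase hs)) with h | h
      · exact absurd h.symm (Finset.ne_of_mem_erase hs)
      · exact h
    have e1 : barR (b1 q) + ∑ s ∈ K.erase q, barR (b1 s) * r s q = b1 q := by
      have hs1 : (∑ᶠ s, barR (b1 s) * r s q) = ∑ s ∈ K, barR (b1 s) * r s q := by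
        refine finsum_eq_finset_sum_of_support_subset _ fun s hs => ?_
        rw [Function.mem_support] at hs
        exact Finset.mem_coe.mpr ((hK s).mpr fun h => hs (by rw [h, mul_zero]))
      have h3 := Finset.add_sum_erase K (fun s => barR (b1 s) * r s q) hqK
      simp only [hdiag, mul_one] at h3
      rw [h3, ← hs1, h1e q]
    have e2 : barR (b2 q) + ∑ s ∈ K.erase q, barR (b2 s) * r s q = b2 q := by
      have hs2 : (∑ᶠ s, barR (b2 s) * r s q) = ∑ s ∈ K, barR (b2 s) * r s q := by
        refine finsum_eq_finset_sum_of_support_subset _ fun s hs => ?_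
        rw [Function.mem_support] at hs
        exact Finset.mem_coe.mpr ((hK s).mpr fun h => hs (by rw [h, mul_zero]))
      have h3 := Finset.add_sum_erase K (fun s => barR (b2 s) * r s q) hqK
      simp only [hdiag, mul_one] at h3
      rw [h3, ← hs2, h2e q]
    have hsums : ∑ s ∈ K.erase q, barR (b1 s) * r s q = ∑ s ∈ K.erase q, barR (b2 s) * r s q :=
      Finset.sum_congr rfl fun s hs => by rw [ih s (hprecK s hs)]
    have hfix : barR (b1 q - b2 q) = b1 q - b2 q := by
      rw [barR_sub]
      linear_combination e1 - e2 - hsums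
    have h0 := cancel (memRgt_sub (h1m q hqp) (h2m q hqp)) hfix
    exact sub_eq_zero.mp h0

end Main

end KLaux

/-- **Abstract Kazhdan–Lusztig lemma.**  Let `Ê = ∏_{p∈I} R β_p` be a topologically free
`R`-module, `≺` a strict partial order on `I` with no infinite ascending chains, and suppose
a bar involution is given on `Ê`, antilinear over the bar involution of `R`, by the matrix
`r` (so `bar β_p = Σ_q r p q β_q`), which is unitriangular (`r p p = 1`, `r p q ≠ 0 ⟹ q ⪯ p`),
column-finite, involutive, and has structure constants symmetric in `σ ↔ σ̄` with real
coefficients.  Then for every `p` there is a unique bar-invariant element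
`b_p ∈ β_p + ∏_{q ≺ p} R^> β_q`. -/
theorem stmt_14 {I : Type*} [DecidableEq I] (prec : I → I → Prop)
    (hirr : ∀ p, ¬ prec p p) (htrans : Transitive prec)
    (hwf : WellFounded fun a b => prec b a)
    (r : I → I → Rhalf)
    (hdiag : ∀ p, r p p = 1)
    (htri : ∀ p q, r p q ≠ 0 → q = p ∨ prec q p)
    (hcol : ∀ q, {s | r s q ≠ 0}.Finite)
    (hinv : ∀ p q, ∑ᶠ s, barR (r p s) * r s q = if q = p then 1 else 0)
    (hsym : ∀ p q (e : ℤ × ℤ), (r p q).coeff (e.2, e.1) = (r p q).coeff e ∧ ∃ x : ℝ, (r p q).coeff e = (x : ℂ)) :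
    ∀ p, ∃! b : I → Rhalf,
      b p = 1 ∧
      (∀ q, q ≠ p → (b q ≠ 0 → prec q p) ∧ memRgt (b q)) ∧
      (∀ q, ∑ᶠ s, barR (b s) * r s q = b q) := by
  intro p
  refine ⟨KLaux.klb prec hwf r p, ⟨KLaux.klb_self prec hwf r p, ?_, ?_⟩, ?_⟩
  · intro q hq
    refine ⟨fun hne => ?_, KLaux.klb_memRgt prec hwf r p hq⟩
    by_contra hnp
    exact hne (KLaux.klb_notle prec hwf r p hq hnp)
  · exact fun q => (KLaux.klb_main hirr htrans hwf hdiag htri hcol hinv hsym p q).2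
  · intro y hy
    exact KLaux.kl_unique hirr htrans hwf hdiag htri hcol p hy.1
      (fun q hq => (hy.2.1 q hq).2) hy.2.2
      (KLaux.klb_self prec hwf r p)
      (fun q hq => KLaux.klb_memRgt prec hwf r p hq)
      (fun q => (KLaux.klb_main hirr htrans hwf hdiag htri hcol hinv hsym p q).2)
end

section
/- Let a be a complex number with |a| < 1 and let i_0 be an integer. Suppose ω_j (j in a nonempty finite set K) are complex numbers of modulus 1 and c_f is a sequence with c_f = Σ_{j∈K} ω_j^f + ε_f where ε_f → 0. Then c_f does not converge to 0; in particular if Σ_{i≤i_0} (±1)^{i f} a^{(i_0−i)f} S_i(f) = 0 for all f, where S_{i_0}(f) = Σ_{j∈K_{i_0}} ω_{i_0 j}^f and all lower terms carry a positive power of a^f, then K_{i_0} = ∅. -/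
open Filter

open Finset in
lemma core (k : ℕ) (hk : 0 < k) (ω : Fin k → ℂ) (hω : ∀ j, ‖ω j‖ = 1) :
    ¬ Tendsto (fun f : ℕ => ∑ j, ω j ^ f) atTop (nhds 0) := by
  intro hS
  set z : Fin k × Fin k → ℂ := fun p => ω p.1 * (starRingEnd ℂ) (ω p.2) with hz
  have habs : ∀ p, ‖z p‖ = 1 := by
    intro p
    simp [hz, map_mul, hω]
  -- normSq of the sum tends to 0
  have hu : Tendsto (fun f : ℕ => Complex.normSq (∑ j, ω j ^ f)) atTop (nhds 0) := by
    have := (Complex.continuous_normSq.tendsto 0).comp hS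
    simpa [Function.comp_def] using this
  have hces := hu.cesaro
  -- key identity
  have key : ∀ N : ℕ, (∑ f ∈ range N, Complex.normSq (∑ j, ω j ^ f)) =
      ∑ p : Fin k × Fin k, (∑ f ∈ range N, z p ^ f).re := by
    intro N
    have h1 : ∀ f : ℕ, Complex.normSq (∑ j, ω j ^ f) = (∑ p : Fin k × Fin k, z p ^ f).re := by
      intro f
      have : (∑ j, ω j ^ f) * (starRingEnd ℂ) (∑ j, ω j ^ f) = ∑ p : Fin k × Fin k, z p ^ f := by
        rw [map_sum, Finset.sum_mul_sum, Fintype.sum_prod_type]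
        simp [hz, mul_pow, map_pow]
      have h2 := Complex.mul_conj (∑ j, ω j ^ f)
      rw [this] at h2
      rw [h2, Complex.ofReal_re]
    simp_rw [h1, Complex.re_sum]
    rw [Finset.sum_comm]
  set d : Fin k × Fin k := (⟨0, hk⟩, ⟨0, hk⟩) with hd
  have hzd : z d = 1 := by
    have := Complex.mul_conj (ω ⟨0, hk⟩)
    rw [hz]
    simp only [hd]
    rw [this, Complex.normSq_eq_norm_sq, hω]
    norm_num
  set C : ℝ := ∑ p : Fin k × Fin k, 2 / ‖1 - z p‖ with hC
  have hC0 : 0 ≤ C := Finset.sum_nonneg fun p _ => by positivity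
  have hbound : ∀ N : ℕ, ∀ p : Fin k × Fin k,
      (if p = d then (N : ℝ) else 0) - 2 / ‖1 - z p‖ ≤ (∑ f ∈ range N, z p ^ f).re := by
    intro N p
    by_cases h1 : z p = 1
    · have : (∑ f ∈ range N, z p ^ f) = (N : ℂ) := by simp [h1]
      rw [this]
      have : (1 : ℂ) - z p = 0 := by rw [h1]; ring
      rw [this]
      simp only [norm_zero, div_zero]
      split <;> simp
    · have hne : p ≠ d := by rintro rfl; exact h1 hzd
      simp only [if_neg hne, zero_sub]
      have hgeo := geom_sum_eq h1 N
      have habs2 : ‖∑ f ∈ range N, z p ^ f‖ ≤ 2 / ‖1 - z p‖ := by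
        rw [hgeo, norm_div]
        have h3 : ‖z p ^ N - 1‖ ≤ 2 := by
          calc ‖z p ^ N - 1‖ ≤ ‖z p ^ N‖ + ‖1‖ :=
            norm_sub_le _ _
          _ = 2 := by rw [norm_pow, habs]; norm_num
        have h4 : ‖z p - 1‖ = ‖1 - z p‖ := norm_sub_rev _ _
        have hzpos : 0 < ‖z p - 1‖ := by
          rw [norm_pos_iff]
          intro h; exact h1 (sub_eq_zero.mp h)
        rw [← h4]
        exact (div_le_div_iff_of_pos_right hzpos).mpr h3
      have := Complex.abs_re_le_norm (∑ f ∈ range N, z p ^ f)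
      have h5 := neg_abs_le ((∑ f ∈ range N, z p ^ f).re)
      nlinarith [norm_nonneg (∑ f ∈ range N, z p ^ f)]
  have hlow : ∀ N : ℕ, (N : ℝ) - C ≤ ∑ f ∈ range N, Complex.normSq (∑ j, ω j ^ f) := by
    intro N
    rw [key]
    calc (N : ℝ) - C = ∑ p : Fin k × Fin k, ((if p = d then (N:ℝ) else 0) - 2 / ‖1 - z p‖) := by
          rw [Finset.sum_sub_distrib, Finset.sum_ite_eq' Finset.univ d (fun _ => (N:ℝ))]
          simp [hC]
      _ ≤ _ := Finset.sum_le_sum fun p _ => hbound N p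
  have h1 : Tendsto (fun N : ℕ => 1 - C / (N : ℝ)) atTop (nhds 1) := by
    have := (tendsto_const_nhds (x := (1:ℝ)) (f := atTop (α := ℕ))).sub
      (tendsto_const_div_atTop_nhds_zero_nat C)
    simpa using this
  have h2 : ∀ᶠ N : ℕ in atTop, (1 : ℝ) - C / N ≤
      (N : ℝ)⁻¹ * ∑ f ∈ range N, Complex.normSq (∑ j, ω j ^ f) := by
    filter_upwards [eventually_ge_atTop 1] with N hN
    have hNpos : (0 : ℝ) < N := by exact_mod_cast hN
    have h3 : (1 : ℝ) - C / N = ((N : ℝ) - C) / N := by field_simp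
    rw [h3, div_le_iff₀ hNpos]
    calc (N:ℝ) - C ≤ ∑ f ∈ range N, Complex.normSq (∑ j, ω j ^ f) := hlow N
      _ = (N : ℝ)⁻¹ * (∑ f ∈ range N, Complex.normSq (∑ j, ω j ^ f)) * N := by
          field_simp
  have := le_of_tendsto_of_tendsto h1 hces h2
  linarith

/-- A perturbed nonempty finite sum of `f`-th powers of unit complex numbers does not tend
to `0`; in particular, in a vanishing alternating expansion
`Σ_{i ≤ i₀} (-1)^{i(f+1)} a^{(i₀−i)f} S_i(f) = 0` (with `|a| < 1`, `S_i(f) = Σ_{j∈K_i} ω_{ij}^f`,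
`|ω_{ij}| = 1`, all lower terms carrying a positive power of `a^f`) the top index set `K_{i₀}`
must be empty. -/
theorem stmt_19 :
    (∀ (k : ℕ), 0 < k → ∀ ω : Fin k → ℂ, (∀ j, ‖ω j‖ = 1) →
      ∀ ε : ℕ → ℂ, Tendsto ε atTop (nhds 0) →
        ¬ Tendsto (fun f : ℕ => (∑ j, ω j ^ f) + ε f) atTop (nhds 0)) ∧
    (∀ (a : ℂ), ‖a‖ < 1 → ∀ (i₀ : ℤ) (S : Finset ℤ), (∀ i ∈ S, i ≤ i₀) → i₀ ∈ S →
      ∀ (K : ℤ → ℕ) (ω : (i : ℤ) → Fin (K i) → ℂ),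
        (∀ i j, ‖ω i j‖ = 1) → (∀ i ∉ S, K i = 0) →
        (∀ f : ℕ, 1 ≤ f →
          ∑ i ∈ S, (-1 : ℂ) ^ (i * ((f : ℤ) + 1)) * a ^ ((i₀ - i) * (f : ℤ)) *
            ∑ j, ω i j ^ f = 0) →
        K i₀ = 0) := by
  constructor
  · intro k hk ω hω ε hε h
    exact core k hk ω hω (by simpa using h.sub hε)
  · intro a ha i₀ S hS hi₀ K ω hω hK heq
    by_contra hne
    have hk : 0 < K i₀ := Nat.pos_of_ne_zero hne
    apply core (K i₀) hk (ω i₀) (hω i₀)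
    have ha0 : 0 ≤ ‖a‖ := norm_nonneg a
    set B : ℝ := ∑ i ∈ S, (K i : ℝ) with hB
    apply squeeze_zero_norm' (a := fun f : ℕ => B * ‖a‖ ^ f)
    · filter_upwards [eventually_ge_atTop 1] with f hf
      set t : ℤ → ℂ := fun i => (-1 : ℂ) ^ (i * ((f : ℤ) + 1)) * a ^ ((i₀ - i) * (f : ℤ)) *
            ∑ j, ω i j ^ f with ht
      have h0 := heq f hf
      have hsplit : t i₀ + ∑ i ∈ S.erase i₀, t i = 0 := by
        rw [Finset.add_sum_erase S t hi₀]; exact h0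
      have habs1 : ∀ i : ℤ, ‖(-1 : ℂ) ^ (i * ((f : ℤ) + 1))‖ = 1 := by
        intro i
        rw [norm_zpow]
        simp
      have hti₀ : ‖t i₀‖ = ‖∑ j, ω i₀ j ^ f‖ := by
        rw [ht]
        simp only [sub_self, zero_mul, zpow_zero, mul_one, norm_mul, habs1, one_mul]
      have hbound : ∀ i ∈ S.erase i₀, ‖t i‖ ≤ (K i : ℝ) * ‖a‖ ^ f := by
        intro i hi
        have hiS := Finset.mem_of_mem_erase hi
        have hlt : i < i₀ := lt_of_le_of_ne (hS i hiS) (Finset.ne_of_mem_erase hi)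
        have hge1 : (1 : ℤ) ≤ i₀ - i := by omega
        have hexp : (0 : ℤ) ≤ (i₀ - i) * (f : ℤ) := by positivity
        set n : ℕ := ((i₀ - i) * (f : ℤ)).toNat with hn
        have hcast : ((i₀ - i) * (f : ℤ)) = (n : ℤ) := (Int.toNat_of_nonneg hexp).symm
        have hfn : f ≤ n := by
          have : (f : ℤ) ≤ (n : ℤ) := by
            rw [← hcast]
            exact le_mul_of_one_le_left (by positivity) hge1
          exact_mod_cast this
        have h1 : ‖a ^ ((i₀ - i) * (f : ℤ))‖ ≤ ‖a‖ ^ f := by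
          rw [hcast, zpow_natCast, norm_pow]
          exact pow_le_pow_of_le_one ha0 ha.le hfn
        have h2 : ‖∑ j, ω i j ^ f‖ ≤ (K i : ℝ) := by
          calc ‖∑ j, ω i j ^ f‖ ≤ ∑ j, ‖ω i j ^ f‖ :=
              norm_sum_le _ _
            _ = (K i : ℝ) := by simp [map_pow, hω]
        rw [ht]
        simp only [norm_mul, habs1, one_mul]
        calc ‖a ^ ((i₀ - i) * (f : ℤ))‖ * ‖∑ j, ω i j ^ f‖
            ≤ ‖a‖ ^ f * (K i : ℝ) := by
              apply mul_le_mul h1 h2 (norm_nonneg _) (by positivity)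
          _ = (K i : ℝ) * ‖a‖ ^ f := mul_comm _ _
      have : ‖t i₀‖ ≤ B * ‖a‖ ^ f := by
        have heq2 : t i₀ = -∑ i ∈ S.erase i₀, t i := by linear_combination hsplit
        rw [heq2, norm_neg]
        calc ‖∑ i ∈ S.erase i₀, t i‖ ≤ ∑ i ∈ S.erase i₀, ‖t i‖ :=
            norm_sum_le _ _
          _ ≤ ∑ i ∈ S.erase i₀, (K i : ℝ) * ‖a‖ ^ f := Finset.sum_le_sum hbound
          _ = (∑ i ∈ S.erase i₀, (K i : ℝ)) * ‖a‖ ^ f := by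
              rw [Finset.sum_mul]
          _ ≤ B * ‖a‖ ^ f := by
              apply mul_le_mul_of_nonneg_right _ (by positivity)
              exact Finset.sum_le_sum_of_subset_of_nonneg (Finset.erase_subset _ _)
                (fun i _ _ => by positivity)
      rw [← hti₀]
      exact this
    · have := (tendsto_pow_atTop_nhds_zero_of_lt_one ha0 ha).const_mul B
      simpa using this
end
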